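/- An integer data vector t is a ⊥-product of a finite set V of integer data vectors if and only if some 0-extension of the matrix M_t is a sum of 0-extensions of the finite set of matrices {M_v : v ∈ V}. -/

import Mathlib

/-- `N` is a 0-extension of `M` if `N` is obtained from `M` by inserting additional zero
columns at arbitrary positions: there is a strictly monotone map of column indices along
which `N` agrees with `M`, all other columns of `N` being zero. -/
def IsZeroExt {d c c' : ℕ} (M : Matrix (Fin d) (Fin c) ℤ) (N : Matrix (Fin d) (Fin c') ℤ) :
    Prop :=
  ∃ f : Fin c → Fin c', StrictMono f ∧
    (∀ i j, N i (f j) = M i j) ∧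
    (∀ i j', (∀ j, f j ≠ j') → N i j' = 0)

/-- `t` is a `⊥`-product of the set `V` of data vectors if
`t = ∑ i, (v i) ∘ (ρ i)` for finitely many members `v i` of `V` (repetitions allowed)
and order-preserving bijections (data permutations) `ρ i` of `D`. -/
def IsPermProduct {D : Type*} [LinearOrder D] {d : ℕ}
    (t : D → Fin d → ℤ) (V : Set (D → Fin d → ℤ)) : Prop :=
  ∃ (m : ℕ) (v : Fin m → D → Fin d → ℤ) (ρ : Fin m → D ≃o D),
    (∀ i, v i ∈ V) ∧ t = ∑ i, (fun α => v i (ρ i α))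

/-- The `d × c` matrix of a finitely supported data vector `v : D → ℤ^d` whose support
is `{α_1 < α_2 < … < α_c}`: its `(i, j)` entry is `v α_j i`. -/
noncomputable def matrixOf {D : Type*} [LinearOrder D] {d : ℕ} (v : D → Fin d → ℤ)
    (hv : (Function.support v).Finite) :
    Matrix (Fin d) (Fin hv.toFinset.card) ℤ :=
  fun i j => v ((hv.toFinset.orderIsoOfFin rfl j : D)) i

noncomputable section

/-- Piecewise linear map: identity below `p`, affine `[p,q] → [p,r]`, shift above `q`. -/
def sPL (p q r : ℚ) : ℚ → ℚ := fun x =>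
  if x ≤ p then x else if x ≤ q then p + (r - p) / (q - p) * (x - p) else x + (r - q)

lemma sPL_inv (p q r : ℚ) (hq : p < q) (hr : p < r) (x : ℚ) :
    sPL p r q (sPL p q r x) = x := by
  have hq0 : q - p ≠ 0 := by linarith
  have hr0 : r - p ≠ 0 := by linarith
  unfold sPL
  rcases le_or_gt x p with h | h
  · simp [h]
  · rcases le_or_gt x q with h2 | h2
    · have hy1 : ¬ (p + (r - p) / (q - p) * (x - p) ≤ p) := by
        have hd : 0 < (r - p) / (q - p) := div_pos (by linarith) (by linarith)
        nlinarith
      have hy2 : p + (r - p) / (q - p) * (x - p) ≤ r := by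
        rw [div_mul_eq_mul_div, ← le_sub_iff_add_le', div_le_iff₀ (by linarith)]
        nlinarith
      simp only [if_neg (not_le.2 h), if_pos h2, if_neg hy1, if_pos hy2]
      field_simp
      ring
    · have hy1 : ¬ (x + (r - q) ≤ p) := by linarith
      have hy2 : ¬ (x + (r - q) ≤ r) := by linarith
      simp only [if_neg (not_le.2 h), if_neg (not_le.2 h2), if_neg hy1, if_neg hy2]
      ring

lemma sPL_mono (p q r : ℚ) (hq : p < q) (hr : p < r) : Monotone (sPL p q r) := by
  have hq0 : (0:ℚ) < q - p := by linarith
  have hr0 : (0:ℚ) < r - p := by linarith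
  intro x y hxy
  unfold sPL
  rcases le_or_gt x p with h1 | h1 <;> rcases le_or_gt y p with h2 | h2
  · simp [h1, h2, hxy]
  · rcases le_or_gt y q with h3 | h3
    · have hd : 0 < (r - p) / (q - p) := div_pos (by linarith) (by linarith)
      simp only [if_pos h1, if_neg (not_le.2 h2), if_pos h3]
      nlinarith
    · simp only [if_pos h1, if_neg (not_le.2 h2), if_neg (not_le.2 h3)]
      linarith
  · linarith
  · rcases le_or_gt x q with h3 | h3 <;> rcases le_or_gt y q with h4 | h4
    · simp only [if_neg (not_le.2 h1), if_neg (not_le.2 h2), if_pos h3, if_pos h4]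
      have : (r - p) / (q - p) * (x - p) ≤ (r - p) / (q - p) * (y - p) := by
        exact mul_le_mul_of_nonneg_left (by linarith) (le_of_lt (div_pos hr0 hq0))
      linarith
    · have hx : p + (r - p) / (q - p) * (x - p) ≤ r := by
        rw [div_mul_eq_mul_div, ← le_sub_iff_add_le', div_le_iff₀ hq0]
        nlinarith
      simp only [if_neg (not_le.2 h1), if_neg (not_le.2 h2), if_pos h3, if_neg (not_le.2 h4)]
      linarith
    · linarith
    · simp only [if_neg (not_le.2 h1), if_neg (not_le.2 h2), if_neg (not_le.2 h3),
        if_neg (not_le.2 h4)]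
      linarith

/-- The 3-piece order automorphism of `ℚ`. -/
def sIso (p q r : ℚ) (hq : p < q) (hr : p < r) : ℚ ≃o ℚ where
  toFun := sPL p q r
  invFun := sPL p r q
  left_inv := sPL_inv p q r hq hr
  right_inv := sPL_inv p r q hr hq
  map_rel_iff' := by
    intro a b
    constructor
    · intro h
      by_contra hab
      have := sPL_mono p q r hq hr (le_of_lt (not_le.1 hab))
      have h2 : sPL p q r a = sPL p q r b := le_antisymm h this
      have : a = b := by
        have := congrArg (sPL p r q) h2
        rwa [sPL_inv p q r hq hr, sPL_inv p q r hq hr] at this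
      exact hab this.le
    · exact fun h => sPL_mono p q r hq hr h

lemma sIso_fix (p q r : ℚ) (hq : p < q) (hr : p < r) {x : ℚ} (hx : x ≤ p) :
    sIso p q r hq hr x = x := by
  simp [sIso, sPL, hx]

lemma sIso_q (p q r : ℚ) (hq : p < q) (hr : p < r) :
    sIso p q r hq hr q = r := by
  have hq0 : q - p ≠ 0 := by linarith
  simp only [sIso, sPL, RelIso.coe_fn_mk, Equiv.coe_fn_mk, if_neg (not_le.2 hq), le_refl,
    if_pos]
  field_simp
  ring

/-- Any two strictly increasing finite sequences in `ℚ` are matched by an order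
automorphism. -/
lemma autoQ : ∀ {n : ℕ} (β γ : Fin n → ℚ), StrictMono β → StrictMono γ →
    ∃ ρ : ℚ ≃o ℚ, ∀ k, ρ (β k) = γ k := by
  intro n
  induction n with
  | zero => exact fun β γ _ _ => ⟨OrderIso.refl ℚ, fun k => k.elim0⟩
  | succ n ih =>
    intro β γ hβ hγ
    cases n with
    | zero =>
      refine ⟨OrderIso.addRight (γ 0 - β 0), fun k => ?_⟩
      have : k = 0 := Fin.ext (by omega)
      subst this
      simp [OrderIso.addRight]
      change β 0 + (γ 0 - β 0) = γ 0
      ring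
    | succ n' =>
      obtain ⟨ρ', hρ'⟩ := ih (β ∘ Fin.castSucc) (γ ∘ Fin.castSucc)
        (hβ.comp Fin.strictMono_castSucc) (hγ.comp Fin.strictMono_castSucc)
      set p := γ (Fin.castSucc (Fin.last n')) with hp
      set q := ρ' (β (Fin.last (n' + 1))) with hqdef
      set r := γ (Fin.last (n' + 1)) with hrdef
      have hq : p < q := by
        have h1 : ρ' (β (Fin.castSucc (Fin.last n'))) = p := hρ' (Fin.last n')
        rw [← h1]
        exact ρ'.strictMono (hβ (Fin.castSucc_lt_last (Fin.last n')))
      have hr : p < r := hγ (Fin.castSucc_lt_last (Fin.last n'))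
      refine ⟨ρ'.trans (sIso p q r hq hr), fun k => ?_⟩
      induction k using Fin.lastCases with
      | last =>
        simp only [OrderIso.trans_apply]
        rw [show ρ' (β (Fin.last (n' + 1))) = q from rfl, sIso_q]
      | cast j =>
        simp only [OrderIso.trans_apply]
        have h1 : ρ' (β (Fin.castSucc j)) = γ (Fin.castSucc j) := hρ' j
        rw [h1, sIso_fix]
        exact hγ.monotone (Fin.castSucc_le_castSucc_iff.2 (Fin.le_last j))

/-- Any two strictly increasing finite sequences in a countable dense order without
endpoints are matched by an order automorphism. -/
lemma autoD {D : Type*} [LinearOrder D] [Countable D] [DenselyOrdered D]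
    [NoMinOrder D] [NoMaxOrder D] {n : ℕ} (β γ : Fin n → D)
    (hβ : StrictMono β) (hγ : StrictMono γ) :
    ∃ ρ : D ≃o D, ∀ k, ρ (β k) = γ k := by
  rcases isEmpty_or_nonempty D with hD | hD
  · exact ⟨OrderIso.refl D, fun k => (IsEmpty.false (β k)).elim⟩
  · obtain ⟨e⟩ : Nonempty (D ≃o ℚ) := Order.iso_of_countable_dense D ℚ
    obtain ⟨ρQ, hρQ⟩ := autoQ (fun k => e (β k)) (fun k => e (γ k))
      (e.strictMono.comp hβ) (e.strictMono.comp hγ)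
    refine ⟨(e.trans ρQ).trans e.symm, fun k => ?_⟩
    simp only [OrderIso.trans_apply]
    rw [hρQ k, OrderIso.symm_apply_apply]

/-- A strictly monotone partial assignment along `f` extends to a full strictly
monotone map `Fin c' → D`. -/
lemma extendEmb {D : Type*} [LinearOrder D] [Countable D] [DenselyOrdered D]
    [NoMinOrder D] [NoMaxOrder D] [Nonempty D] {c c' : ℕ}
    (e : Fin c → D) (he : StrictMono e) (f : Fin c → Fin c') (hf : StrictMono f) :
    ∃ g : Fin c' → D, StrictMono g ∧ ∀ j, g (f j) = e j := by
  obtain ⟨ε⟩ : Nonempty (D ≃o ℚ) := Order.iso_of_countable_dense D ℚ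
  have hβ : StrictMono (fun j => ((f j : ℕ) : ℚ)) := by
    intro a b hab
    exact_mod_cast Nat.cast_lt.2 (hf hab)
  obtain ⟨ρ, hρ⟩ := autoQ (fun j => ((f j : ℕ) : ℚ)) (fun j => ε (e j)) hβ
    (ε.strictMono.comp he)
  refine ⟨fun j' => ε.symm (ρ ((j' : ℕ) : ℚ)), ?_, fun j => ?_⟩
  · intro a b hab
    have : ((a : ℕ) : ℚ) < ((b : ℕ) : ℚ) := by exact_mod_cast hab
    exact ε.symm.strictMono (ρ.strictMono this)
  · simp only []
    rw [hρ j, OrderIso.symm_apply_apply]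
end

lemma exists_enum {D : Type*} [LinearOrder D] (s : Finset D) {α : D} (h : α ∈ s) :
    ∃ k : Fin s.card, (s.orderIsoOfFin rfl k : D) = α :=
  ⟨(s.orderIsoOfFin rfl).symm ⟨α, h⟩, by simp⟩

lemma restrict_isZeroExt {D : Type*} [LinearOrder D] {d : ℕ} (w : D → Fin d → ℤ)
    (hw : (Function.support w).Finite) (S : Finset D) (hsub : hw.toFinset ⊆ S) :
    IsZeroExt (matrixOf w hw)
      (fun i j => w ((S.orderIsoOfFin rfl j : D)) i : Matrix (Fin d) (Fin S.card) ℤ) := by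
  set ew := hw.toFinset.orderIsoOfFin rfl with hew
  set eS := S.orderIsoOfFin rfl with heS
  refine ⟨fun j => eS.symm ⟨(ew j : D), hsub (ew j).2⟩, ?_, ?_, ?_⟩
  · intro a b hab
    apply eS.symm.strictMono
    exact Subtype.mk_lt_mk.2 (Subtype.mk_lt_mk.1 (ew.strictMono hab))
  · intro i j
    simp only [OrderIso.apply_symm_apply]
    rfl
  · intro i j' hmiss
    by_contra hne
    have hmem : (eS j' : D) ∈ hw.toFinset := by
      rw [Set.Finite.mem_toFinset]
      intro h0
      exact hne (congrFun h0 i)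
    obtain ⟨k, hk⟩ : ∃ k, (ew k : D) = (eS j' : D) :=
      ⟨ew.symm ⟨_, hmem⟩, by simp⟩
    apply hmiss k
    show eS.symm ⟨(ew k : D), hsub (ew k).2⟩ = j'
    have h3 : (⟨(ew k : D), hsub (ew k).2⟩ : {x // x ∈ S}) = eS j' := Subtype.ext hk
    rw [h3, OrderIso.symm_apply_apply]

lemma isZeroExt_comp {D : Type*} [LinearOrder D] {d c' : ℕ} (v : D → Fin d → ℤ)
    (hv : (Function.support v).Finite) (ρ : D ≃o D)
    (hw : (Function.support (fun α => v (ρ α))).Finite)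
    {N : Matrix (Fin d) (Fin c') ℤ}
    (h : IsZeroExt (matrixOf (fun α => v (ρ α)) hw) N) :
    IsZeroExt (matrixOf v hv) N := by
  have hsupp : Function.support (fun α => v (ρ α)) = ρ ⁻¹' Function.support v := by
    ext α; simp [Function.support, Set.mem_preimage]
  have hfin : hw.toFinset = Finset.image (ρ.symm : D → D) hv.toFinset := by
    ext α
    simp only [Set.Finite.mem_toFinset, Finset.mem_image, Set.Finite.mem_toFinset, hsupp,
      Set.mem_preimage]
    constructor
    · intro hα; exact ⟨ρ α, hα, ρ.symm_apply_apply α⟩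
    · rintro ⟨β, hβ, rfl⟩; simpa using hβ
  have hvw : hv.toFinset.card = hw.toFinset.card := by
    rw [hfin, Finset.card_image_of_injective _ ρ.symm.injective]
  -- the key enumeration identity
  have henum : ∀ j : Fin hv.toFinset.card,
      (hv.toFinset.orderIsoOfFin rfl j : D)
        = ρ ((hw.toFinset.orderIsoOfFin rfl (Fin.cast hvw j) : D)) := by
    have :=
      Finset.orderEmbOfFin_unique (s := hv.toFinset) (k := hv.toFinset.card) rfl
        (f := fun j => ρ ((hw.toFinset.orderIsoOfFin rfl (Fin.cast hvw j) : D)))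
        (fun j => by
          have hm : ((hw.toFinset.orderIsoOfFin rfl) (Fin.cast hvw j) : D)
              ∈ Function.support (fun α => v (ρ α)) :=
            (Set.Finite.mem_toFinset hw).1
              ((hw.toFinset.orderIsoOfFin rfl) (Fin.cast hvw j)).2
          show ρ ((hw.toFinset.orderIsoOfFin rfl (Fin.cast hvw j) : D)) ∈ hv.toFinset
          rw [Set.Finite.mem_toFinset]
          exact hm)
        (by
          intro a b hab
          apply ρ.strictMono
          have := (hw.toFinset.orderIsoOfFin rfl).strictMono
            (show (Fin.cast hvw a) < (Fin.cast hvw b) from hab)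
          exact Subtype.mk_lt_mk.1 this)
    intro j
    have h2 := congrFun this j
    rw [h2, ← Finset.coe_orderIsoOfFin_apply]
  have hmat : ∀ i j, matrixOf v hv i j = matrixOf (fun α => v (ρ α)) hw i (Fin.cast hvw j) := by
    intro i j
    simp only [matrixOf]
    rw [henum j]
  obtain ⟨f, hmono, hagree, hzero⟩ := h
  refine ⟨fun j => f (Fin.cast hvw j), ?_, ?_, ?_⟩
  · intro a b hab
    exact hmono (show (Fin.cast hvw a) < (Fin.cast hvw b) from hab)
  · intro i j
    rw [hagree i (Fin.cast hvw j), hmat]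
  · intro i j' hmiss
    apply hzero
    intro j
    have : j = Fin.cast hvw (Fin.cast hvw.symm j) := rfl
    rw [this]
    exact hmiss _

set_option maxHeartbeats 1000000 in
/-- An integer data vector `t` is a `⊥`-product of a finite set `V` of integer data
vectors if and only if some 0-extension of the matrix `matrixOf t` is a sum of
0-extensions of the matrices `matrixOf v`, `v ∈ V`. -/
theorem permProduct_iff_sum_of_zeroExt {D : Type*} [LinearOrder D] [Countable D]
    [DenselyOrdered D] [NoMinOrder D] [NoMaxOrder D] {d : ℕ}
    (t : D → Fin d → ℤ) (ht : (Function.support t).Finite)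
    (V : Set (D → Fin d → ℤ)) (hVfin : V.Finite)
    (hVs : ∀ v ∈ V, (Function.support v).Finite) :
    IsPermProduct t V ↔
      ∃ (c' : ℕ) (N : Matrix (Fin d) (Fin c') ℤ),
        IsZeroExt (matrixOf t ht) N ∧
        ∃ (m : ℕ) (w : Fin m → D → Fin d → ℤ) (hw : ∀ i, w i ∈ V)
          (Ns : Fin m → Matrix (Fin d) (Fin c') ℤ),
          (∀ i, IsZeroExt (matrixOf (w i) (hVs (w i) (hw i))) (Ns i)) ∧
          N = ∑ i, Ns i := by
  constructor
  · rintro ⟨m, v, ρ, hvV, hsum⟩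
    have hwfin : ∀ i : Fin m, (Function.support (fun α => v i (ρ i α))).Finite := by
      intro i
      have hp : Function.support (fun α => v i (ρ i α))
          = (ρ i) ⁻¹' Function.support (v i) := by
        ext α; simp [Function.support]
      rw [hp]
      exact Set.Finite.preimage ((ρ i).injective.injOn) (hVs (v i) (hvV i))
    set S : Finset D := ht.toFinset ∪ Finset.univ.biUnion (fun i => (hwfin i).toFinset)
      with hS
    refine ⟨S.card, (fun r j => t ((S.orderIsoOfFin rfl j : D)) r), ?_, m, v, hvV,
      (fun i => (fun r j => v i (ρ i ((S.orderIsoOfFin rfl j : D))) r)), ?_, ?_⟩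
    · exact restrict_isZeroExt t ht S Finset.subset_union_left
    · intro i
      exact isZeroExt_comp (v i) (hVs (v i) (hvV i)) (ρ i) (hwfin i)
        (restrict_isZeroExt (fun α => v i (ρ i α)) (hwfin i) S
          (subset_trans (Finset.subset_biUnion_of_mem (fun i => (hwfin i).toFinset) (Finset.mem_univ i))
            Finset.subset_union_right))
    · funext r j
      rw [hsum]
      simp [Finset.sum_apply, Matrix.sum_apply]
      exact (Matrix.sum_apply r j Finset.univ (fun i => (fun r j => v i (ρ i ((S.orderIsoOfFin rfl j : D))) r : Matrix (Fin d) (Fin S.card) ℤ))).symm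
  · rintro ⟨c', N, ⟨ft, hftmono, hftagree, hftzero⟩, m, w, hwV, Ns, hNs, hNsum⟩
    rcases isEmpty_or_nonempty D with hD | hD
    · refine ⟨0, Fin.elim0, Fin.elim0, fun i => i.elim0, ?_⟩
      funext α
      exact (IsEmpty.false α).elim
    · choose fi hfi using hNs
      have hfimono : ∀ i, StrictMono (fi i) := fun i => (hfi i).1
      have hfiagree : ∀ i r k, Ns i r (fi i k) = matrixOf (w i) (hVs (w i) (hwV i)) r k :=
        fun i => (hfi i).2.1
      have hfizero : ∀ i r j', (∀ k, fi i k ≠ j') → Ns i r j' = 0 := fun i => (hfi i).2.2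
      set et : Fin ht.toFinset.card → D :=
        fun j => (ht.toFinset.orderIsoOfFin rfl j : D) with het
      have hetmono : StrictMono et := fun a b hab =>
        Subtype.mk_lt_mk.1 ((ht.toFinset.orderIsoOfFin rfl).strictMono hab)
      obtain ⟨g, hgmono, hgf⟩ := extendEmb et hetmono ft hftmono
      set en : ∀ i : Fin m, Fin (hVs (w i) (hwV i)).toFinset.card → D :=
        fun i k => ((hVs (w i) (hwV i)).toFinset.orderIsoOfFin rfl k : D) with hen
      have henmono : ∀ i, StrictMono (en i) := fun i a b hab =>
        Subtype.mk_lt_mk.1 (((hVs (w i) (hwV i)).toFinset.orderIsoOfFin rfl).strictMono hab)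
      choose σ hσ using fun i : Fin m =>
        autoD (fun k => g (fi i k)) (en i) (hgmono.comp (hfimono i)) (henmono i)
      refine ⟨m, w, σ, hwV, ?_⟩
      funext α r
      have hR : (∑ i, (fun α => w i (σ i α))) α r = ∑ i, w i (σ i α) r := by
        simp [Finset.sum_apply]
      rw [hR]
      -- key pointwise claims
      by_cases hα : ∃ j', g j' = α
      · obtain ⟨j', rfl⟩ := hα
        have claim1 : ∀ i, w i (σ i (g j')) r = Ns i r j' := by
          intro i
          by_cases hex : ∃ k, fi i k = j'
          · obtain ⟨k, rfl⟩ := hex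
            rw [hσ i k, hfiagree i r k]
            rfl
          · push_neg at hex
            rw [hfizero i r j' hex]
            by_contra hne
            have hmem : σ i (g j') ∈ (hVs (w i) (hwV i)).toFinset := by
              rw [Set.Finite.mem_toFinset]
              intro h0
              exact hne (congrFun h0 r)
            obtain ⟨k, hk⟩ := exists_enum _ hmem
            have : σ i (g (fi i k)) = σ i (g j') := by rw [hσ i k]; exact hk
            exact hex k (hgmono.injective ((σ i).injective this))
        have claim2 : t (g j') r = N r j' := by
          by_cases hex : ∃ j, ft j = j'
          · obtain ⟨j, rfl⟩ := hex
            rw [hgf j, hftagree r j]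
            rfl
          · push_neg at hex
            rw [hftzero r j' hex]
            by_contra hne
            have hmem : g j' ∈ ht.toFinset := by
              rw [Set.Finite.mem_toFinset]
              intro h0
              exact hne (congrFun h0 r)
            obtain ⟨j, hj⟩ := exists_enum _ hmem
            have : g (ft j) = g j' := by rw [hgf j]; exact hj
            exact hex j (hgmono.injective this)
        rw [claim2, hNsum]
        simp only [Matrix.sum_apply]
        exact Finset.sum_congr rfl (fun i _ => (claim1 i).symm)
      · push_neg at hα
        have h0 : t α r = 0 := by
          by_contra hne
          have hmem : α ∈ ht.toFinset := by
            rw [Set.Finite.mem_toFinset]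
            intro h0
            exact hne (congrFun h0 r)
          obtain ⟨j, hj⟩ := exists_enum _ hmem
          exact hα (ft j) (by rw [hgf j]; exact hj)
        rw [h0]
        refine (Finset.sum_eq_zero fun i _ => ?_).symm
        by_contra hne
        have hmem : σ i α ∈ (hVs (w i) (hwV i)).toFinset := by
          rw [Set.Finite.mem_toFinset]
          intro h0
          exact hne (congrFun h0 r)
        obtain ⟨k, hk⟩ := exists_enum _ hmem
        have : σ i (g (fi i k)) = σ i α := by rw [hσ i k]; exact hk
        exact hα (fi i k) ((σ i).injective this)
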